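/- Let G be a finite simple graph, f : V(G) → ℝ with f(v) ≤ 1/(d(v)+1/2) for all v. Suppose v is a vertex with d(v) ≤ d(u) for every neighbor u of v, and f(v) + ∑_{u∈N(v)} f(u) > 1. Then fewer than (d(v) + 3/2)/2 neighbors of v have degree strictly greater than d(v). -/

import Mathlib

/-- A set of vertices is independent if its vertices are pairwise non-adjacent. -/
def SimpleGraph.IsIndepSet' {V : Type*} (G : SimpleGraph V) (s : Set V) : Prop :=
  s.Pairwise (fun u v => ¬ G.Adj u v)

open scoped Classical

theorem stmt_9 {V : Type*} [Fintype V] [DecidableEq V] (G : SimpleGraph V)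
    [DecidableRel G.Adj] (f : V → ℝ)
    (hf : ∀ v, f v ≤ 1 / (G.degree v + 1 / 2)) (v : V)
    (hmin : ∀ u ∈ G.neighborFinset v, G.degree v ≤ G.degree u)
    (hsum : 1 < f v + ∑ u ∈ G.neighborFinset v, f u) :
    (((G.neighborFinset v).filter (fun u => G.degree v < G.degree u)).card : ℝ) <
      ((G.degree v : ℝ) + 3 / 2) / 2 := by
  set S := G.neighborFinset v with hS
  set A := S.filter (fun u => G.degree v < G.degree u) with hA
  set B := S.filter (fun u => ¬ G.degree v < G.degree u) with hB
  have hd : (0:ℝ) ≤ (G.degree v : ℝ) := Nat.cast_nonneg _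
  have h1 : (0:ℝ) < (G.degree v : ℝ) + 1/2 := by linarith
  have h3 : (0:ℝ) < (G.degree v : ℝ) + 3/2 := by linarith
  have hScard : (S.card : ℝ) = (G.degree v : ℝ) := by
    rw [hS, SimpleGraph.card_neighborFinset_eq_degree]
  have hcards : A.card + B.card = S.card := Finset.card_filter_add_card_filter_not _
  have hsumA : ∑ u ∈ A, f u ≤ (A.card : ℝ) * (1 / ((G.degree v : ℝ) + 3/2)) := by
    have := Finset.sum_le_card_nsmul A f (1 / ((G.degree v : ℝ) + 3/2)) ?_
    · simpa [nsmul_eq_mul] using this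
    · intro u hu
      rw [hA, Finset.mem_filter] at hu
      have hdu : (G.degree v : ℝ) + 3/2 ≤ (G.degree u : ℝ) + 1/2 := by
        have : G.degree v + 1 ≤ G.degree u := hu.2
        have := (Nat.cast_le (α := ℝ)).2 this
        push_cast at this ⊢
        linarith
      calc f u ≤ 1 / ((G.degree u : ℝ) + 1/2) := hf u
        _ ≤ 1 / ((G.degree v : ℝ) + 3/2) := by
            apply one_div_le_one_div_of_le h3 hdu
  have hsumB : ∑ u ∈ B, f u ≤ (B.card : ℝ) * (1 / ((G.degree v : ℝ) + 1/2)) := by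
    have := Finset.sum_le_card_nsmul B f (1 / ((G.degree v : ℝ) + 1/2)) ?_
    · simpa [nsmul_eq_mul] using this
    · intro u hu
      rw [hB, Finset.mem_filter] at hu
      have hdu : G.degree u = G.degree v :=
        le_antisymm (not_lt.mp hu.2) (hmin u hu.1)
      calc f u ≤ 1 / ((G.degree u : ℝ) + 1/2) := hf u
        _ = 1 / ((G.degree v : ℝ) + 1/2) := by rw [hdu]
  have hsplit : ∑ u ∈ S, f u = ∑ u ∈ A, f u + ∑ u ∈ B, f u :=
    (Finset.sum_filter_add_sum_filter_not S _ f).symm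
  have hfv : f v ≤ 1 / ((G.degree v : ℝ) + 1/2) := hf v
  have hBcard : (B.card : ℝ) = (G.degree v : ℝ) - (A.card : ℝ) := by
    have : (A.card : ℝ) + (B.card : ℝ) = (S.card : ℝ) := by exact_mod_cast hcards
    linarith [hScard]
  have hkd : (A.card : ℝ) ≤ (G.degree v : ℝ) := by
    have : A.card ≤ S.card := Finset.card_le_card (Finset.filter_subset _ _)
    have := (Nat.cast_le (α := ℝ)).2 this
    linarith [hScard]
  set k : ℝ := (A.card : ℝ)
  set d : ℝ := (G.degree v : ℝ)
  have key : 1 < 1/(d+1/2) + (k * (1/(d+3/2)) + (d - k) * (1/(d+1/2))) := by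
    rw [hsplit] at hsum
    rw [hBcard] at hsumB
    linarith
  have hmul : (d+1/2)*(d+3/2) > 0 := mul_pos h1 h3
  have h1' : d + 1/2 ≠ 0 := ne_of_gt h1
  have h3' : d + 3/2 ≠ 0 := ne_of_gt h3
  field_simp at key
  by_contra hcon
  push_neg at hcon
  nlinarith [key, mul_nonneg (sub_nonneg.2 hcon) h1.le, h1, h3]
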